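/- Let X be a Polish space and let E be an analytic equivalence relation on X. Then for every uncountable Borel set B ⊆ X there exists an uncountable Borel set C ⊆ B such that E ∩ (C × C) (the graph of the restriction of E to C) is a Borel subset of X × X. (This is the statement that Σ¹₁ →_I Δ¹₁ holds for the σ-ideal of countable sets.) -/

import Mathlib

set_option linter.unusedSectionVars false
set_option linter.deprecated false
set_option maxHeartbeats 1000000

open MeasureTheory Set

namespace DST


variable {α : Type*} [TopologicalSpace α] [DiscreteTopology α] [Nonempty α]

/-- The cylinder of a finite word: sequences starting with `w`. -/
def cyl (w : List α) : Set (ℕ → α) := {x | ∀ i, ∀ h : i < w.length, x i = w.get ⟨i, h⟩}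

lemma cyl_nil : cyl ([] : List α) = univ := by
  ext x; simp [cyl]

lemma cyl_nonempty (w : List α) : (cyl w).Nonempty := by
  inhabit α
  refine ⟨fun i => if h : i < w.length then w.get ⟨i, h⟩ else default, ?_⟩
  intro i h; simp [h]

lemma isOpen_cyl (w : List α) : IsOpen (cyl w) := by
  have : cyl w = ⋂ i : Fin w.length, {x : ℕ → α | x i = w.get i} := by
    ext x; simp only [cyl, mem_iInter, mem_setOf_eq]
    exact ⟨fun h i => h i i.2, fun h i hi => h ⟨i, hi⟩⟩
  rw [this]
  refine isOpen_iInter_of_finite fun i => ?_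
  have : {x : ℕ → α | x i = w.get i} = (fun x : ℕ → α => x (i : ℕ)) ⁻¹' {w.get i} := by
    ext x; simp
  rw [this]
  exact (isOpen_discrete _).preimage (continuous_apply (i : ℕ))

lemma isClosed_cyl (w : List α) : IsClosed (cyl w) := by
  have : cyl w = ⋂ i : Fin w.length, {x : ℕ → α | x i = w.get i} := by
    ext x; simp only [cyl, mem_iInter, mem_setOf_eq]
    exact ⟨fun h i => h i i.2, fun h i hi => h ⟨i, hi⟩⟩
  rw [this]
  refine isClosed_iInter fun i => ?_
  have : {x : ℕ → α | x i = w.get i} = (fun x : ℕ → α => x (i : ℕ)) ⁻¹' {w.get i} := by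
    ext x; simp
  rw [this]
  exact (isClosed_discrete _).preimage (continuous_apply (i : ℕ))

/-- Prefix of length `m` of an infinite sequence. -/
def pre (y : ℕ → α) (m : ℕ) : List α := List.ofFn fun i : Fin m => y i

@[simp] lemma length_pre (y : ℕ → α) (m : ℕ) : (pre y m).length = m := by
  simp [pre]

lemma mem_cyl_pre {x y : ℕ → α} {m : ℕ} : x ∈ cyl (pre y m) ↔ ∀ i < m, x i = y i := by
  constructor
  · intro h i hi
    have := h i (by simpa using hi)
    simpa [pre] using this
  · intro h i hi
    have hi' : i < m := by simpa using hi
    simpa [pre] using h i hi'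

lemma self_mem_cyl_pre (y : ℕ → α) (m : ℕ) : y ∈ cyl (pre y m) :=
  mem_cyl_pre.2 fun _ _ => rfl

lemma cyl_pre_mono (y : ℕ → α) {m m' : ℕ} (h : m ≤ m') : cyl (pre y m') ⊆ cyl (pre y m) := by
  intro x hx
  exact mem_cyl_pre.2 fun i hi => mem_cyl_pre.1 hx i (lt_of_lt_of_le hi h)

lemma cyl_pre_subset {y : ℕ → α} {w : List α} (hy : y ∈ cyl w) {m : ℕ} (hm : w.length ≤ m) :
    cyl (pre y m) ⊆ cyl w := by
  intro x hx i hi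
  rw [mem_cyl_pre.1 hx i (lt_of_lt_of_le hi hm)]
  exact hy i hi

lemma cyl_basis {O : Set (ℕ → α)} (hO : IsOpen O) {y : ℕ → α} (hy : y ∈ O) :
    ∃ m, cyl (pre y m) ⊆ O := by
  obtain ⟨I, u, hI, hsub⟩ := isOpen_pi_iff.1 hO y hy
  refine ⟨I.sup id + 1, fun x hx => hsub ?_⟩
  intro a ha
  have : x a = y a := mem_cyl_pre.1 hx a (Nat.lt_succ_of_le (Finset.le_sup (f := id) ha))
  rw [this]; exact (hI a ha).2

lemma cyl_agree {x y : ℕ → α} {w : List α} (hx : x ∈ cyl w) (hy : y ∈ cyl w)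
    {i : ℕ} (hi : i < w.length) : x i = y i := by
  rw [hx i hi, hy i hi]

lemma cyl_concat_subset (w : List α) (a : α) : cyl (w ++ [a]) ⊆ cyl w := by
  intro x hx i hi
  have hi' : i < (w ++ [a]).length := by simp; omega
  have := hx i hi'
  rwa [List.get_eq_getElem, List.getElem_append_left hi] at this

lemma cyl_concat_disjoint {w : List α} {a b : α} (hab : a ≠ b) :
    cyl (w ++ [a]) ∩ cyl (w ++ [b]) = ∅ := by
  ext x
  simp only [mem_inter_iff, mem_empty_iff_false, iff_false, not_and]
  intro hxa hxb
  have hl : w.length < (w ++ [a]).length := by simp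
  have hl' : w.length < (w ++ [b]).length := by simp
  have h1 := hxa w.length hl
  have h2 := hxb w.length hl'
  apply hab
  have e1 : (w ++ [a]).get ⟨w.length, hl⟩ = a := by
    simp [List.getElem_append_right]
  have e2 : (w ++ [b]).get ⟨w.length, hl'⟩ = b := by
    simp [List.getElem_append_right]
  rw [e1] at h1; rw [e2] at h2; rw [← h1, ← h2]

lemma cyl_eq_iUnion_concat (w : List α) : cyl w = ⋃ a : α, cyl (w ++ [a]) := by
  ext x
  simp only [mem_iUnion]
  constructor
  · intro hx
    refine ⟨x w.length, fun i hi => ?_⟩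
    rcases Nat.lt_or_ge i w.length with h | h
    · rw [List.get_eq_getElem, List.getElem_append_left h]; exact hx i h
    · have : i = w.length := by
        have : i < w.length + 1 := by simpa using hi
        omega
      subst this
      simp [List.getElem_append_right]
  · rintro ⟨a, ha⟩
    exact cyl_concat_subset w a ha


variable {Y : Type*} [TopologicalSpace Y]

lemma nwd_isMeagre {s : Set Y} (hc : IsClosed s) (hi : interior s = ∅) : IsMeagre s := by
  rw [IsMeagre, mem_residual_iff]
  exact ⟨{sᶜ}, by simpa using hc.isOpen_compl,
    by simpa using interior_eq_empty_iff_dense_compl.1 hi, countable_singleton _,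
    by simp⟩

lemma open_nonmeagre [BaireSpace Y] {U : Set Y} (hU : IsOpen U) (hne : U.Nonempty) :
    ¬ IsMeagre U := by
  intro h
  obtain ⟨x, hx⟩ := hne
  have hd : Dense Uᶜ := dense_of_mem_residual h
  obtain ⟨y, hyc, hy⟩ := hd.exists_mem_open hU ⟨x, hx⟩
  exact hyc hy

lemma isMeagre_union {s t : Set Y} (hs : IsMeagre s) (ht : IsMeagre t) : IsMeagre (s ∪ t) := by
  rw [IsMeagre, compl_union]
  exact Filter.inter_mem hs ht

lemma isMeagre_iUnion' {ι : Sort*} [Countable ι] {s : ι → Set Y} (h : ∀ i, IsMeagre (s i)) :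
    IsMeagre (⋃ i, s i) := by
  rw [IsMeagre, compl_iUnion]
  exact (countable_iInter_mem).mpr h

/-- A meagre set is covered by countably many closed nowhere dense sets. -/
lemma meager_cover {A : Set Y} (hA : IsMeagre A) :
    ∃ M : ℕ → Set Y, (∀ k, IsClosed (M k) ∧ interior (M k) = ∅) ∧ A ⊆ ⋃ k, M k := by
  rw [IsMeagre, mem_residual_iff] at hA
  obtain ⟨S, hSo, hSd, hSc, hSs⟩ := hA
  rcases S.eq_empty_or_nonempty with rfl | hne
  · refine ⟨fun _ => ∅, fun k => ⟨isClosed_empty, by simp⟩, ?_⟩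
    have : A = ∅ := by
      have := hSs; simp only [sInter_empty] at this
      have : A ⊆ ∅ := fun x hx => (this (mem_univ x)) hx
      exact eq_empty_iff_forall_notMem.2 fun x hx => this hx
    simp [this]
  · obtain ⟨f, hf⟩ := hSc.exists_eq_range hne
    refine ⟨fun k => (f k)ᶜ, fun k => ?_, ?_⟩
    · have hfo : IsOpen (f k) := hSo _ (hf ▸ mem_range_self k)
      have hfd : Dense (f k) := hSd _ (hf ▸ mem_range_self k)
      exact ⟨hfo.isClosed_compl, by
        rw [interior_compl, hfd.closure_eq, compl_univ]⟩
    · intro x hx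
      by_contra hc
      simp only [mem_iUnion, mem_compl_iff, not_exists, not_not] at hc
      have hxi : x ∈ ⋂₀ S := by
        rw [hf]; rintro t ⟨k, rfl⟩; exact hc k
      exact (hSs hxi) hx


section Fusion

lemma uncountable_cantor : Uncountable (ℕ → Bool) := by
  rw [← not_countable_iff]
  intro hcnt
  obtain ⟨f, hf⟩ := exists_surjective_nat (ℕ → Bool)
  classical
  set h : ℕ → Set ℕ := fun n => {m | f n m = true} with hh
  apply Function.cantor_surjective h
  intro S
  obtain ⟨n, hn⟩ := hf (fun m => decide (m ∈ S))
  refine ⟨n, ?_⟩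
  ext m
  simp [hh, hn]

lemma avoid_mono {β : Type*} {s s' t t' : Set β} {M : Set (β × β)}
    (hs : s' ⊆ s) (ht : t' ⊆ t) (h : (s ×ˢ t) ∩ M = ∅) : (s' ×ˢ t') ∩ M = ∅ := by
  apply eq_empty_of_subset_empty
  rw [← h]
  exact inter_subset_inter_left _ (prod_mono hs ht)

lemma shrink1 {O : Set (ℕ → Bool)} (hO : IsOpen O) {c : List Bool}
    (hne : (cyl c ∩ O).Nonempty) :
    ∃ c', cyl c' ⊆ cyl c ∧ cyl c' ⊆ O ∧ c.length ≤ c'.length := by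
  obtain ⟨y, hyc, hyO⟩ := hne
  obtain ⟨m, hm⟩ := cyl_basis hO hyO
  refine ⟨pre y (max m c.length), cyl_pre_subset hyc (le_max_right _ _),
    (cyl_pre_mono y (le_max_left _ _)).trans hm, by simp⟩

lemma shrink2 {M : Set ((ℕ → Bool) × (ℕ → Bool))} (hMc : IsClosed M)
    (hMi : interior M = ∅) (a b : List Bool) :
    ∃ a' b', cyl a' ⊆ cyl a ∧ cyl b' ⊆ cyl b ∧ a.length ≤ a'.length ∧
      b.length ≤ b'.length ∧ (cyl a' ×ˢ cyl b') ∩ M = ∅ := by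
  have hd : Dense Mᶜ := interior_eq_empty_iff_dense_compl.1 hMi
  have hbox : IsOpen (cyl a ×ˢ cyl b) := (isOpen_cyl a).prod (isOpen_cyl b)
  have hbne : (cyl a ×ˢ cyl b).Nonempty := (cyl_nonempty a).prod (cyl_nonempty b)
  obtain ⟨p, hpC, hpB⟩ := hd.exists_mem_open hbox hbne
  obtain ⟨u, v, hu, hv, hyu, hzv, huv⟩ := isOpen_prod_iff.1 hMc.isOpen_compl p.1 p.2 hpC
  obtain ⟨m₁, hm₁⟩ := cyl_basis hu hyu
  obtain ⟨m₂, hm₂⟩ := cyl_basis hv hzv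
  refine ⟨pre p.1 (max m₁ a.length), pre p.2 (max m₂ b.length),
    cyl_pre_subset hpB.1 (le_max_right _ _), cyl_pre_subset hpB.2 (le_max_right _ _),
    by simp, by simp, ?_⟩
  apply eq_empty_of_subset_empty
  rintro ⟨x, y⟩ ⟨⟨hx, hy⟩, hM⟩
  have : (x, y) ∈ Mᶜ := huv ⟨hm₁ ((cyl_pre_mono p.1 (le_max_left _ _)) hx),
    hm₂ ((cyl_pre_mono p.2 (le_max_left _ _)) hy)⟩
  exact this hM

variable {ι : Type*} [DecidableEq ι]

lemma foldA {O : Set (ℕ → Bool)} (hO : IsOpen O) {w₀ : List Bool}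
    (hdense : ∀ c : List Bool, cyl c ⊆ cyl w₀ → (cyl c ∩ O).Nonempty) :
    ∀ (l : List ι) (F : ι → List Bool), (∀ i, cyl (F i) ⊆ cyl w₀) →
    ∃ F' : ι → List Bool,
      (∀ i, cyl (F' i) ⊆ cyl (F i) ∧ (F i).length ≤ (F' i).length) ∧
      (∀ i, cyl (F' i) ⊆ cyl w₀) ∧ ∀ i ∈ l, cyl (F' i) ⊆ O := by
  intro l
  induction l with
  | nil => exact fun F hF => ⟨F, fun i => ⟨subset_rfl, le_rfl⟩, hF, by simp⟩
  | cons i₀ l ih =>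
    intro F hF
    obtain ⟨F1, h1, h1w, h1l⟩ := ih F hF
    obtain ⟨c', hc1, hc2, hc3⟩ := shrink1 hO (hdense (F1 i₀) (h1w i₀))
    classical
    refine ⟨Function.update F1 i₀ c', fun i => ?_, fun i => ?_, fun i hi => ?_⟩
    · by_cases h : i = i₀
      · subst h
        simp only [Function.update_self]
        exact ⟨hc1.trans (h1 i).1, (h1 i).2.trans hc3⟩
      · simp only [Function.update_of_ne h]
        exact h1 i
    · by_cases h : i = i₀
      · subst h; simp only [Function.update_self]; exact hc1.trans (h1w i)
      · simp only [Function.update_of_ne h]; exact h1w i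
    · rcases List.mem_cons.1 hi with rfl | hi'
      · simp only [Function.update_self]; exact hc2
      · by_cases h : i = i₀
        · subst h; simp only [Function.update_self]; exact hc2
        · simp only [Function.update_of_ne h]; exact h1l i hi'

lemma foldB {M : ℕ → Set ((ℕ → Bool) × (ℕ → Bool))} (hMc : ∀ k, IsClosed (M k))
    (hMi : ∀ k, interior (M k) = ∅) :
    ∀ (l : List ((ι × ι) × ℕ)) (F : ι → List Bool),
    ∃ F' : ι → List Bool,
      (∀ i, cyl (F' i) ⊆ cyl (F i) ∧ (F i).length ≤ (F' i).length) ∧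
      ∀ p ∈ l, p.1.1 ≠ p.1.2 → (cyl (F' p.1.1) ×ˢ cyl (F' p.1.2)) ∩ M p.2 = ∅ := by
  intro l
  induction l with
  | nil => exact fun F => ⟨F, fun i => ⟨subset_rfl, le_rfl⟩, by simp⟩
  | cons q l ih =>
    intro F
    obtain ⟨F1, h1, h1l⟩ := ih F
    obtain ⟨⟨i, j⟩, k⟩ := q
    by_cases hij : i = j
    · refine ⟨F1, h1, fun p hp hpne => ?_⟩
      rcases List.mem_cons.1 hp with rfl | hp'
      · exact absurd hij hpne
      · exact h1l p hp' hpne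
    · obtain ⟨a', b', ha1, hb1, ha2, hb2, hab⟩ := shrink2 (hMc k) (hMi k) (F1 i) (F1 j)
      classical
      set F' := Function.update (Function.update F1 i a') j b' with hF'
      have hFi : F' i = a' := by
        rw [hF', Function.update_of_ne hij, Function.update_self]
      have hFj : F' j = b' := by rw [hF', Function.update_self]
      have hmono : ∀ i', cyl (F' i') ⊆ cyl (F1 i') ∧ (F1 i').length ≤ (F' i').length := by
        intro i'
        by_cases h1' : i' = j
        · subst h1'; rw [hFj]; exact ⟨hb1, hb2⟩
        · by_cases h2' : i' = i
          · subst h2'; rw [hFi]; exact ⟨ha1, ha2⟩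
          · rw [hF', Function.update_of_ne h1', Function.update_of_ne h2']
            exact ⟨subset_rfl, le_rfl⟩
      refine ⟨F', fun i' => ⟨(hmono i').1.trans (h1 i').1, (h1 i').2.trans (hmono i').2⟩,
        fun p hp hpne => ?_⟩
      rcases List.mem_cons.1 hp with rfl | hp'
      · rw [hFi, hFj]; exact hab
      · exact avoid_mono (hmono p.1.1).1 (hmono p.1.2).1 (h1l p hp' hpne)

end Fusion

section FusionMain

/-- Invariant of the Cantor scheme construction at level `n`. -/
def Inv (w₀ : List Bool) (D : ℕ → Set (ℕ → Bool)) (M : ℕ → Set ((ℕ → Bool) × (ℕ → Bool)))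
    (n : ℕ) (w : (Fin n → Bool) → List Bool) : Prop :=
  (∀ σ, cyl (w σ) ⊆ cyl w₀) ∧ (∀ σ, n ≤ (w σ).length) ∧
  (∀ σ τ, σ ≠ τ → cyl (w σ) ∩ cyl (w τ) = ∅) ∧
  (∀ σ, ∀ k < n, cyl (w σ) ⊆ D k) ∧
  (∀ σ τ, σ ≠ τ → ∀ k < n, (cyl (w σ) ×ˢ cyl (w τ)) ∩ M k = ∅)

lemma step_ex {w₀ : List Bool} {D : ℕ → Set (ℕ → Bool)}
    {M : ℕ → Set ((ℕ → Bool) × (ℕ → Bool))}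
    (hDo : ∀ k, IsOpen (D k)) (hDd : ∀ k c, cyl c ⊆ cyl w₀ → (cyl c ∩ D k).Nonempty)
    (hMc : ∀ k, IsClosed (M k)) (hMi : ∀ k, interior (M k) = ∅)
    (n : ℕ) (w : (Fin n → Bool) → List Bool) (h : Inv w₀ D M n w) :
    ∃ w' : (Fin (n + 1) → Bool) → List Bool, Inv w₀ D M (n + 1) w' ∧
      ∀ σ, cyl (w' σ) ⊆ cyl (w fun i => σ i.castSucc) := by
  classical
  obtain ⟨h1, h2, h3, h4, h5⟩ := h
  set par : (Fin (n + 1) → Bool) → Fin n → Bool := fun σ i => σ i.castSucc with hpar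
  set c : (Fin (n + 1) → Bool) → List Bool := fun σ => w (par σ) ++ [σ (Fin.last n)] with hc
  have hcsub : ∀ σ, cyl (c σ) ⊆ cyl (w (par σ)) := fun σ => cyl_concat_subset _ _
  have hcw₀ : ∀ σ, cyl (c σ) ⊆ cyl w₀ := fun σ => (hcsub σ).trans (h1 _)
  have hclen : ∀ σ, n + 1 ≤ (c σ).length := by
    intro σ; rw [hc]; simp only [List.length_append, List.length_singleton]
    have := h2 (par σ); omega
  have hcdisj : ∀ σ τ, σ ≠ τ → cyl (c σ) ∩ cyl (c τ) = ∅ := by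
    intro σ τ hστ
    by_cases hp : par σ = par τ
    · have hlast : σ (Fin.last n) ≠ τ (Fin.last n) := by
        intro he
        apply hστ
        funext i
        refine Fin.lastCases he (fun j => ?_) i
        exact congrFun hp j
      rw [hc]; simp only
      rw [hp]
      exact cyl_concat_disjoint hlast
    · apply eq_empty_of_subset_empty
      rw [← h3 (par σ) (par τ) hp]
      exact inter_subset_inter (hcsub σ) (hcsub τ)
  -- Fold A : refine into D n
  obtain ⟨F1, hF1, hF1w, hF1D⟩ := foldA (hDo n) (hDd n)
    (Finset.univ : Finset (Fin (n + 1) → Bool)).toList c hcw₀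
  -- Fold B : pair avoidance for all pairs and k ≤ n
  obtain ⟨F2, hF2, hF2M⟩ := foldB hMc hMi
    ((Finset.univ ×ˢ Finset.range (n + 1)).toList :
      List (((Fin (n + 1) → Bool) × (Fin (n + 1) → Bool)) × ℕ)) F1
  refine ⟨F2, ⟨?_, ?_, ?_, ?_, ?_⟩, ?_⟩
  · exact fun σ => ((hF2 σ).1.trans (hF1 σ).1).trans (hcw₀ σ)
  · exact fun σ => (hclen σ).trans ((hF1 σ).2.trans (hF2 σ).2)
  · intro σ τ hστ
    apply eq_empty_of_subset_empty
    rw [← hcdisj σ τ hστ]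
    exact inter_subset_inter ((hF2 σ).1.trans (hF1 σ).1) ((hF2 τ).1.trans (hF1 τ).1)
  · intro σ k hk
    rcases Nat.lt_or_ge k n with hkn | hkn
    · exact (((hF2 σ).1.trans (hF1 σ).1).trans (hcsub σ)).trans (h4 (par σ) k hkn)
    · have hkn' : k = n := by omega
      subst hkn'
      exact (hF2 σ).1.trans (hF1D σ (Finset.mem_toList.2 (Finset.mem_univ _)))
  · intro σ τ hστ k hk
    refine hF2M ((σ, τ), k) ?_ hστ
    rw [Finset.mem_toList, Finset.mem_product]
    exact ⟨Finset.mem_univ _, Finset.mem_range.2 hk⟩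
  · exact fun σ => ((hF2 σ).1.trans (hF1 σ).1).trans (hcsub σ)

lemma fusion {w₀ : List Bool} {D : ℕ → Set (ℕ → Bool)}
    {M : ℕ → Set ((ℕ → Bool) × (ℕ → Bool))}
    (hDo : ∀ k, IsOpen (D k)) (hDd : ∀ k c, cyl c ⊆ cyl w₀ → (cyl c ∩ D k).Nonempty)
    (hMc : ∀ k, IsClosed (M k)) (hMi : ∀ k, interior (M k) = ∅) :
    ∃ C : Set (ℕ → Bool), IsCompact C ∧ ¬ C.Countable ∧ C ⊆ cyl w₀ ∧
      (∀ x ∈ C, ∀ k, x ∈ D k) ∧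
      ∀ x ∈ C, ∀ y ∈ C, x ≠ y → ∀ k, (x, y) ∉ M k := by
  classical
  have base : Inv w₀ D M 0 (fun _ => w₀) := by
    refine ⟨fun _ => subset_rfl, fun _ => Nat.zero_le _, fun σ τ hστ => ?_,
      fun σ k hk => absurd hk (Nat.not_lt_zero k), fun σ τ hστ k hk => absurd hk (Nat.not_lt_zero k)⟩
    exact absurd (funext fun i => i.elim0) hστ
  let State : ℕ → Type := fun n => {w : (Fin n → Bool) → List Bool // Inv w₀ D M n w}
  let stepF : ∀ n, State n → State (n + 1) := fun n s =>
    ⟨(step_ex hDo hDd hMc hMi n s.1 s.2).choose,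
     (step_ex hDo hDd hMc hMi n s.1 s.2).choose_spec.1⟩
  let H : ∀ n, State n := fun n => Nat.rec ⟨fun _ => w₀, base⟩ stepF n
  have Hpar : ∀ n σ, cyl ((H (n + 1)).1 σ) ⊆ cyl ((H n).1 fun i => σ i.castSucc) :=
    fun n σ => (step_ex hDo hDd hMc hMi n (H n).1 (H n).2).choose_spec.2 σ
  -- branch cylinders
  let A : ∀ n, (Fin n → Bool) → Set (ℕ → Bool) := fun n σ => cyl ((H n).1 σ)
  have hAcl : ∀ n σ, IsClosed (A n σ) := fun n σ => isClosed_cyl _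
  have hAne : ∀ n σ, (A n σ).Nonempty := fun n σ => cyl_nonempty _
  let σb : (ℕ → Bool) → ∀ n, Fin n → Bool := fun b n i => b i
  have hchain : ∀ b n, A (n + 1) (σb b (n + 1)) ⊆ A n (σb b n) := by
    intro b n
    have := Hpar n (σb b (n + 1))
    have he : (fun i : Fin n => σb b (n + 1) i.castSucc) = σb b n := by
      funext i; simp [σb, Fin.coe_castSucc]
    rwa [he] at this
  have hbne : ∀ b, (⋂ n, A n (σb b n)).Nonempty := by
    intro b
    exact IsCompact.nonempty_iInter_of_sequence_nonempty_isCompact_isClosed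
      (fun n => A n (σb b n)) (hchain b) (fun n => hAne _ _)
      ((hAcl 0 _).isCompact) (fun n => hAcl _ _)
  let x : (ℕ → Bool) → (ℕ → Bool) := fun b => (hbne b).choose
  have hx : ∀ b n, x b ∈ A n (σb b n) := fun b =>
    mem_iInter.1 (hbne b).choose_spec
  set C : Set (ℕ → Bool) := ⋂ n, ⋃ σ : Fin n → Bool, A n σ with hC
  have hCcl : IsClosed C := isClosed_iInter fun n => isClosed_iUnion_of_finite fun σ => hAcl n σ
  have hxC : ∀ b, x b ∈ C := by
    intro b
    refine mem_iInter.2 fun n => mem_iUnion.2 ⟨σb b n, hx b n⟩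
  have hxinj : Function.Injective x := by
    intro b b' hbb'
    by_contra hne
    obtain ⟨i, hi⟩ := Function.ne_iff.1 hne
    have hσ : σb b (i + 1) ≠ σb b' (i + 1) := by
      intro he
      exact hi (congrFun he ⟨i, Nat.lt_succ_self i⟩)
    have hd := ((H (i + 1)).2.2.2.1 : ∀ _ _, _ ≠ _ → _) (σb b (i + 1)) (σb b' (i + 1)) hσ
    have : x b ∈ A (i + 1) (σb b (i + 1)) ∩ A (i + 1) (σb b' (i + 1)) :=
      ⟨hx b (i + 1), hbb' ▸ hx b' (i + 1)⟩
    rw [hd] at this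
    exact this
  refine ⟨C, hCcl.isCompact, ?_, ?_, ?_, ?_⟩
  · intro hcnt
    have hrc : (range x).Countable := hcnt.mono (range_subset_iff.2 hxC)
    haveI := uncountable_cantor
    have h2 := hrc.preimage hxinj
    rw [preimage_range] at h2
    exact Set.not_countable_univ h2
  · intro z hz
    have hz0 := mem_iInter.1 hz 0
    obtain ⟨σ, hσ⟩ := mem_iUnion.1 hz0
    exact hσ
  · intro z hz k
    obtain ⟨σ, hσ⟩ := mem_iUnion.1 (mem_iInter.1 hz (k + 1))
    exact ((H (k + 1)).2.2.2.2.1 σ k (Nat.lt_succ_self k)) hσ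
  · intro z hz y hy hzy k
    obtain ⟨i, hi⟩ := Function.ne_iff.1 hzy
    set n := max (k + 1) (i + 1) with hn
    obtain ⟨σ, hσ⟩ := mem_iUnion.1 (mem_iInter.1 hz n)
    obtain ⟨τ, hτ⟩ := mem_iUnion.1 (mem_iInter.1 hy n)
    have hστ : σ ≠ τ := by
      intro he
      subst he
      apply hi
      exact cyl_agree hσ hτ (lt_of_lt_of_le (by omega) ((H n).2.2.1 σ))
    intro hM
    have := (H n).2.2.2.2.2 σ τ hστ k (by omega)
    have hmem : (z, y) ∈ (A n σ ×ˢ A n τ) ∩ M k := ⟨⟨hσ, hτ⟩, hM⟩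
    rw [this] at hmem
    exact hmem

end FusionMain

section BPD

variable {Y : Type*} [TopologicalSpace Y]

lemma isMeagre_biUnion {S : Set (Set Y)} (hc : S.Countable) (h : ∀ s ∈ S, IsMeagre s) :
    IsMeagre (⋃₀ S) := by
  rw [sUnion_eq_iUnion]
  haveI := hc.to_subtype
  exact isMeagre_iUnion' fun i => h i i.2

lemma isMeagre_diff_interior {W : Set Y} (hW : IsClosed W) : IsMeagre (W \ interior W) := by
  refine nwd_isMeagre (by rw [diff_eq]; exact hW.inter isOpen_interior.isClosed_compl) ?_
  rw [eq_empty_iff_forall_notMem]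
  intro y hy
  exact (interior_subset hy).2 (interior_mono diff_subset hy)

lemma isMeagre_closure_diff {G : Set Y} (hG : IsOpen G) : IsMeagre (closure G \ G) := by
  refine nwd_isMeagre (by rw [diff_eq]; exact isClosed_closure.inter hG.isClosed_compl) ?_
  rw [eq_empty_iff_forall_notMem]
  intro y hy
  have h1 : y ∈ closure G := (interior_subset hy).1
  obtain ⟨w, hw1, hw2⟩ := mem_closure_iff.1 h1 _ isOpen_interior hy
  exact (interior_subset hw1).2 hw2

lemma miniBP [BaireSpace Y] {Cs : Set Y} (hC : IsClosed Cs) {W : ℕ → Set Y}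
    (hW : ∀ n, IsClosed (W n)) (h : ¬ IsMeagre (Cs \ ⋃ n, W n)) :
    ∃ V : Set Y, IsOpen V ∧ V.Nonempty ∧ IsMeagre (V \ (Cs \ ⋃ n, W n)) := by
  set S := Cs \ ⋃ n, W n with hS
  have hCnm : ¬ IsMeagre Cs := fun h' => h (h'.mono diff_subset)
  have hUne : (interior Cs).Nonempty := by
    rcases eq_empty_or_nonempty (interior Cs) with he | hne
    · exact absurd (nwd_isMeagre hC he) hCnm
    · exact hne
  set G := ⋃ n, interior (W n) with hG
  have hGopen : IsOpen G := isOpen_iUnion fun n => isOpen_interior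
  have hSG : S ∩ G = ∅ := by
    rw [eq_empty_iff_forall_notMem]
    rintro y ⟨hyS, hyG⟩
    obtain ⟨n, hn⟩ := mem_iUnion.1 hyG
    exact hyS.2 (mem_iUnion.2 ⟨n, interior_subset hn⟩)
  have hfr : IsMeagre (Cs \ interior Cs) := isMeagre_diff_interior hC
  have hSU : ¬ IsMeagre (S ∩ interior Cs) := by
    intro hm
    apply h
    have hsub : S ⊆ (S ∩ interior Cs) ∪ (Cs \ interior Cs) := by
      intro y hy
      by_cases hyi : y ∈ interior Cs
      · exact Or.inl ⟨hy, hyi⟩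
      · exact Or.inr ⟨hy.1, hyi⟩
    exact (isMeagre_union hm hfr).mono hsub
  have hUG : ¬ interior Cs ⊆ closure G := by
    intro hsub
    apply hSU
    have hclG : IsMeagre (closure G \ G) := isMeagre_closure_diff hGopen
    refine hclG.mono ?_
    rintro y ⟨hyS, hyU⟩
    refine ⟨hsub hyU, fun hyG => ?_⟩
    rw [eq_empty_iff_forall_notMem] at hSG
    exact hSG y ⟨hyS, hyG⟩
  obtain ⟨z, hzU, hzG⟩ := not_subset.1 hUG
  refine ⟨interior Cs ∩ (closure G)ᶜ, isOpen_interior.inter isClosed_closure.isOpen_compl,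
    ⟨z, hzU, hzG⟩, ?_⟩
  have hsub : (interior Cs ∩ (closure G)ᶜ) \ S ⊆ ⋃ n, (W n \ interior (W n)) := by
    rintro y ⟨⟨hyU, hyG⟩, hyS⟩
    have hyC : y ∈ Cs := interior_subset hyU
    have hyW : y ∈ ⋃ n, W n := by
      by_contra h'
      exact hyS ⟨hyC, h'⟩
    obtain ⟨n, hn⟩ := mem_iUnion.1 hyW
    refine mem_iUnion.2 ⟨n, hn, fun hint => ?_⟩
    exact hyG (subset_closure (mem_iUnion.2 ⟨n, hint⟩))
  exact (isMeagre_iUnion' fun n => isMeagre_diff_interior (hW n)).mono hsub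

end BPD

section BPD2
open MeasureTheory Filter Topology

lemma bpd {Y : Type*} [TopologicalSpace Y] [PolishSpace Y] {A : Set Y}
    (hA : AnalyticSet A) (hnm : ¬ IsMeagre A) :
    ∃ V : Set Y, IsOpen V ∧ V.Nonempty ∧ IsMeagre (V \ A) := by
  letI := TopologicalSpace.upgradeIsCompletelyMetrizable Y
  rw [AnalyticSet_def] at hA
  rcases hA with rfl | ⟨g, hg, hrange⟩
  · exact absurd IsMeagre.empty hnm
  obtain ⟨b, hbc, hbne, hb⟩ := TopologicalSpace.exists_countable_basis Y
  set N : List ℕ → Set Y := fun s => g '' cyl s with hN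
  set kerS : Set Y → Set Y := fun S => ⋃₀ {V | V ∈ b ∧ IsMeagre (V ∩ S)} with hkerS
  have hker_open : ∀ S, IsOpen (kerS S) := fun S => isOpen_sUnion fun V hV => hb.isOpen hV.1
  have mk1 : ∀ S : Set Y, IsMeagre (S ∩ kerS S) := by
    intro S
    have hsub : S ∩ kerS S ⊆ ⋃₀ ((fun V => V ∩ S) '' {V | V ∈ b ∧ IsMeagre (V ∩ S)}) := by
      rintro y ⟨hyS, V, hV, hyV⟩
      exact ⟨V ∩ S, mem_image_of_mem _ hV, hyV, hyS⟩
    refine (isMeagre_biUnion ((hbc.mono fun V hV => hV.1).image _) ?_).mono hsub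
    rintro t ⟨V, hV, rfl⟩
    exact hV.2
  have mk3 : ∀ (S : Set Y) (x : Y), x ∉ kerS S → ∀ V ∈ b, x ∈ V → ¬ IsMeagre (V ∩ S) :=
    fun S x hx V hV hxV hm => hx ⟨V, ⟨hV, hm⟩, hxV⟩
  set Hs : List ℕ → Set Y := fun s => (kerS (N s))ᶜ ∩ closure (N s) with hHs
  have hHcl : ∀ s, IsClosed (Hs s) := fun s => (hker_open _).isClosed_compl.inter isClosed_closure
  have hNHm : ∀ s, IsMeagre (N s \ Hs s) := by
    intro s
    refine (mk1 (N s)).mono ?_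
    rintro y ⟨hyN, hyH⟩
    refine ⟨hyN, ?_⟩
    by_contra hk
    exact hyH ⟨hk, subset_closure hyN⟩
  have hNsplit : ∀ s : List ℕ, N s = ⋃ n : ℕ, N (s ++ [n]) := by
    intro s
    show g '' cyl s = ⋃ n : ℕ, g '' cyl (s ++ [n])
    rw [cyl_eq_iUnion_concat (α := ℕ) s, image_iUnion]
  have claim1 : ∀ s : List ℕ, IsMeagre (Hs s \ ⋃ n : ℕ, Hs (s ++ [n])) := by
    intro s
    by_contra hT
    obtain ⟨V', hV'o, hV'ne, hV'm⟩ := miniBP (hHcl s) (fun n => hHcl (s ++ [n])) hT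
    have hV'nm : ¬ IsMeagre V' := open_nonmeagre hV'o hV'ne
    have hVTnm : ¬ IsMeagre (V' ∩ (Hs s \ ⋃ n : ℕ, Hs (s ++ [n]))) := by
      intro hm
      apply hV'nm
      have hsub : V' ⊆ (V' \ (Hs s \ ⋃ n : ℕ, Hs (s ++ [n]))) ∪
          (V' ∩ (Hs s \ ⋃ n : ℕ, Hs (s ++ [n]))) := by
        intro y hy
        by_cases hyT : y ∈ Hs s \ ⋃ n : ℕ, Hs (s ++ [n])
        exacts [Or.inr ⟨hy, hyT⟩, Or.inl ⟨hy, hyT⟩]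
      exact (isMeagre_union hV'm hm).mono hsub
    have hne : (V' ∩ (Hs s \ ⋃ n : ℕ, Hs (s ++ [n]))).Nonempty := by
      rcases eq_empty_or_nonempty (V' ∩ (Hs s \ ⋃ n : ℕ, Hs (s ++ [n]))) with he | hne
      · rw [he] at hVTnm; exact absurd IsMeagre.empty hVTnm
      · exact hne
    obtain ⟨x, hxV', hxT⟩ := hne
    obtain ⟨V, hVb, hxV, hVsub⟩ := hb.exists_subset_of_mem_open hxV' hV'o
    have hxker : x ∉ kerS (N s) := hxT.1.1
    have h1 : ¬ IsMeagre (V ∩ N s) := mk3 _ _ hxker V hVb hxV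
    have h2 : ∃ n : ℕ, ¬ IsMeagre (V ∩ N (s ++ [n])) := by
      by_contra h'
      push_neg at h'
      apply h1
      have he : V ∩ N s = ⋃ n : ℕ, V ∩ N (s ++ [n]) := by rw [hNsplit s, inter_iUnion]
      rw [he]
      exact isMeagre_iUnion' h'
    obtain ⟨n, hn⟩ := h2
    have h3 : ¬ IsMeagre (V ∩ Hs (s ++ [n])) := by
      intro hm
      apply hn
      have hsub : V ∩ N (s ++ [n]) ⊆ (V ∩ Hs (s ++ [n])) ∪ (N (s ++ [n]) \ Hs (s ++ [n])) := by
        rintro y ⟨hyV, hyN⟩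
        by_cases hyH : y ∈ Hs (s ++ [n])
        exacts [Or.inl ⟨hyV, hyH⟩, Or.inr ⟨hyN, hyH⟩]
      exact (isMeagre_union hm (hNHm _)).mono hsub
    apply h3
    refine hV'm.mono ?_
    rintro y ⟨hyV, hyH⟩
    refine ⟨hVsub hyV, fun hyT => ?_⟩
    exact hyT.2 (mem_iUnion.2 ⟨n, hyH⟩)
  set Bad : Set Y := ⋃ s : List ℕ, (Hs s \ ⋃ n : ℕ, Hs (s ++ [n])) with hBad
  have hBadm : IsMeagre Bad := isMeagre_iUnion' fun s => claim1 s
  have hpath : ∀ x, x ∈ Hs [] → x ∉ Bad → x ∈ range g := by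
    intro x hx0 hxB
    have hstep : ∀ s : List ℕ, x ∈ Hs s → ∃ n : ℕ, x ∈ Hs (s ++ [n]) := by
      intro s hxs
      by_contra h'
      push_neg at h'
      refine hxB (mem_iUnion.2 ⟨s, hxs, fun hm => ?_⟩)
      obtain ⟨n, hn⟩ := mem_iUnion.1 hm
      exact h' n hn
    let f : ∀ _ : ℕ, {s : List ℕ // x ∈ Hs s} := fun n =>
      Nat.rec ⟨[], hx0⟩ (fun _ p => ⟨p.1 ++ [(hstep p.1 p.2).choose], (hstep p.1 p.2).choose_spec⟩) n
    have hflen : ∀ n, ((f n).1).length = n := by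
      intro n
      induction n with
      | zero => rfl
      | succ n ih =>
        show ((f n).1 ++ [_]).length = n + 1
        simp [ih]
    have hfsucc : ∀ n, (f (n + 1)).1 = (f n).1 ++ [(hstep (f n).1 (f n).2).choose] := fun n => rfl
    set ω : ℕ → ℕ := fun i => ((f (i + 1)).1).getD i 0 with hω
    have hpref : ∀ n i, i < n → ((f n).1).getD i 0 = ω i := by
      intro n
      induction n with
      | zero => intro i hi; omega
      | succ n ih =>
        intro i hi
        rcases Nat.lt_or_ge i n with h | h
        · rw [hfsucc n, List.getD_append _ _ _ _ (by rw [hflen]; omega)]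
          exact ih i h
        · have : i = n := by omega
          subst this
          rfl
    have hθex : ∀ n : ℕ, ∃ θ : ℕ → ℕ, θ ∈ cyl ((f n).1) ∧ dist x (g θ) < 1 / (n + 1) := by
      intro n
      have hcl : x ∈ closure (N ((f n).1)) := (f n).2.2
      have hpos : (0 : ℝ) < 1 / (n + 1) := by positivity
      obtain ⟨y, hyN, hyd⟩ := Metric.mem_closure_iff.1 hcl _ hpos
      obtain ⟨θ, hθc, rfl⟩ := hyN
      exact ⟨θ, hθc, hyd⟩
    set θ : ℕ → (ℕ → ℕ) := fun n => (hθex n).choose with hθ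
    have hθc : ∀ n, θ n ∈ cyl ((f n).1) := fun n => (hθex n).choose_spec.1
    have hθd : ∀ n, dist x (g (θ n)) < 1 / (n + 1) := fun n => (hθex n).choose_spec.2
    have hθt : Tendsto θ atTop (𝓝 ω) := by
      rw [tendsto_pi_nhds]
      intro i
      refine Tendsto.congr' ?_ (tendsto_const_nhds (α := ℕ) (f := atTop))
      rw [EventuallyEq, eventually_atTop]
      refine ⟨i + 1, fun n hn => ?_⟩
      have hlen : i < ((f n).1).length := by rw [hflen]; omega
      have := hθc n i hlen
      rw [this]
      have : ((f n).1).get ⟨i, hlen⟩ = ((f n).1).getD i 0 := by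
        rw [List.getD_eq_getElem _ _ hlen]
        rfl
      rw [this, hpref n i (by omega)]
    have h1 : Tendsto (fun n => g (θ n)) atTop (𝓝 (g ω)) := (hg.tendsto ω).comp hθt
    have h2 : Tendsto (fun n => g (θ n)) atTop (𝓝 x) := by
      rw [tendsto_iff_dist_tendsto_zero]
      refine squeeze_zero (fun n => dist_nonneg) (fun n => ?_)
        tendsto_one_div_add_atTop_nhds_zero_nat
      rw [dist_comm]
      exact le_of_lt (hθd n)
    exact ⟨ω, tendsto_nhds_unique h1 h2⟩
  have hN0 : N [] = A := by
    show g '' cyl ([] : List ℕ) = A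
    rw [cyl_nil, image_univ, hrange]
  have hA1 : IsMeagre (A \ Hs []) := by
    have := hNHm []
    rwa [hN0] at this
  have hH0nm : ¬ IsMeagre (Hs []) := by
    intro hm
    apply hnm
    have hsub : A ⊆ (A \ Hs []) ∪ Hs [] := by
      intro y hy
      by_cases hyH : y ∈ Hs []
      exacts [Or.inr hyH, Or.inl ⟨hy, hyH⟩]
    exact (isMeagre_union hA1 hm).mono hsub
  have hint : (interior (Hs [])).Nonempty := by
    rcases eq_empty_or_nonempty (interior (Hs [])) with he | hne
    · exact absurd (nwd_isMeagre (hHcl []) he) hH0nm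
    · exact hne
  refine ⟨interior (Hs []), isOpen_interior, hint, ?_⟩
  refine hBadm.mono ?_
  rintro y ⟨hyH, hyA⟩
  by_contra hyB
  exact hyA (hrange ▸ hpath y (interior_subset hyH) hyB)

end BPD2

section KU

lemma ku {A : Set ((ℕ → Bool) × (ℕ → Bool))} {U V : Set (ℕ → Bool)}
    (hU : IsOpen U) (hUne : U.Nonempty) (hV : IsOpen V) (hVne : V.Nonempty)
    (hm : IsMeagre ((U ×ˢ V) \ A)) :
    ∃ x ∈ U, ∃ C : Set (ℕ → Bool), IsCompact C ∧ ¬ C.Countable ∧ ∀ y ∈ C, (x, y) ∈ A := by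
  classical
  -- countably many dense open sets whose intersection avoids (U ×ˢ V) \ A
  obtain ⟨O, hOo, hOd, hOi⟩ : ∃ O : ℕ → Set ((ℕ → Bool) × (ℕ → Bool)),
      (∀ n, IsOpen (O n)) ∧ (∀ n, Dense (O n)) ∧ (⋂ n, O n) ⊆ ((U ×ˢ V) \ A)ᶜ := by
    rw [IsMeagre, mem_residual_iff] at hm
    obtain ⟨S, hSo, hSd, hSc, hSs⟩ := hm
    rcases S.eq_empty_or_nonempty with rfl | hne
    · refine ⟨fun _ => univ, fun _ => isOpen_univ, fun _ => dense_univ, ?_⟩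
      intro p _
      exact hSs (by simp)
    · obtain ⟨f, hf⟩ := hSc.exists_eq_range hne
      refine ⟨f, fun n => hSo _ (hf ▸ mem_range_self n), fun n => hSd _ (hf ▸ mem_range_self n),
        fun p hp => hSs ?_⟩
      rw [hf]
      rintro t ⟨n, rfl⟩
      exact mem_iInter.1 hp n
  obtain ⟨v, hv⟩ := hVne
  obtain ⟨m, hw₀⟩ := cyl_basis hV hv
  set w₀ : List Bool := pre v m with hw₀def
  -- bad sets
  set Bad : ℕ × List Bool → Set (ℕ → Bool) :=
    fun q => {x | ∀ y ∈ cyl q.2, (x, y) ∉ O q.1} with hBad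
  have hBadcl : ∀ q, IsClosed (Bad q) := by
    intro q
    have : (Bad q)ᶜ = ⋃ y : cyl q.2, (fun x => (x, (y : ℕ → Bool))) ⁻¹' O q.1 := by
      ext x
      simp only [hBad, mem_compl_iff, mem_setOf_eq, mem_iUnion, mem_preimage, not_forall]
      constructor
      · rintro ⟨y, hy1, hy2⟩
        rw [not_not] at hy2
        exact ⟨⟨y, hy1⟩, hy2⟩
      · rintro ⟨⟨y, hy1⟩, hy2⟩
        exact ⟨y, hy1, by rwa [not_not]⟩
    rw [← isOpen_compl_iff, this]
    exact isOpen_iUnion fun y =>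
      (hOo q.1).preimage (continuous_id.prodMk continuous_const)
  have hBadint : ∀ q, interior (Bad q) = ∅ := by
    intro q
    rw [eq_empty_iff_forall_notMem]
    intro x hx
    have hbox : IsOpen (interior (Bad q) ×ˢ cyl q.2) := isOpen_interior.prod (isOpen_cyl _)
    have hboxne : (interior (Bad q) ×ˢ cyl q.2).Nonempty := ⟨⟨x, (cyl_nonempty q.2).choose⟩,
      hx, (cyl_nonempty q.2).choose_spec⟩
    obtain ⟨p, hpO, hpB⟩ := (hOd q.1).exists_mem_open hbox hboxne
    exact (interior_subset hpB.1) p.2 hpB.2 hpO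
  have hBadm : IsMeagre (⋃ q : ℕ × List Bool, Bad q) :=
    isMeagre_iUnion' fun q => nwd_isMeagre (hBadcl q) (hBadint q)
  have hxex : ∃ x ∈ U, x ∉ ⋃ q : ℕ × List Bool, Bad q := by
    by_contra h'
    push_neg at h'
    exact open_nonmeagre hU hUne (hBadm.mono h')
  obtain ⟨x, hxU, hxB⟩ := hxex
  -- fusion inside cyl w₀ with dense sections
  have hfus := fusion (w₀ := w₀) (D := fun n => {y | (x, y) ∈ O n}) (M := fun _ => ∅)
    (fun n => (hOo n).preimage (continuous_const.prodMk continuous_id))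
    (fun n c hc => ?_) (fun _ => isClosed_empty) (fun _ => interior_empty)
  · obtain ⟨C, hC1, hC2, hC3, hC4, -⟩ := hfus
    refine ⟨x, hxU, C, hC1, hC2, fun y hy => ?_⟩
    have h1 : (x, y) ∈ ⋂ n, O n := mem_iInter.2 fun n => hC4 y hy n
    have h2 := hOi h1
    rw [mem_compl_iff, mem_diff, not_and, not_not] at h2
    exact h2 ⟨hxU, hw₀ (hw₀def ▸ hC3 hy)⟩
  · -- density of sections
    have : x ∉ Bad (n, c) := fun hb => hxB (mem_iUnion.2 ⟨(n, c), hb⟩)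
    rw [hBad] at this
    simp only [mem_setOf_eq, not_forall] at this
    obtain ⟨y, hy1, hy2⟩ := this
    rw [not_not] at hy2
    exact ⟨y, hy1, hy2⟩

end KU

end DST

open MeasureTheory Set

/-- `Σ¹₁ →_I Δ¹₁` for the σ-ideal of countable sets: for every analytic
equivalence relation `E` on a Polish space and every uncountable Borel set `B`,
there is an uncountable Borel `C ⊆ B` on which `E` is Borel. -/
theorem analytic_equivalence_borel_on_uncountable_borel_subset
    {X : Type*} [TopologicalSpace X] [PolishSpace X]
    [MeasurableSpace X] [BorelSpace X]
    (E : X → X → Prop) (hE : Equivalence E)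
    (hEan : AnalyticSet {p : X × X | E p.1 p.2}) :
    ∀ B : Set X, MeasurableSet B → ¬ B.Countable →
      ∃ C : Set X, C ⊆ B ∧ MeasurableSet C ∧ ¬ C.Countable ∧
        MeasurableSet ({p : X × X | E p.1 p.2} ∩ C ×ˢ C) := by
  intro B hB hBu
  have hfex : ∃ f : (ℕ → Bool) → X, range f ⊆ B ∧ Continuous f ∧ Function.Injective f := by
    obtain ⟨t', ht'le, ht'pol, hBclosed, -⟩ := hB.isClopenable
    obtain ⟨f, hfr, hfc, hfi⟩ :=
      @IsClosed.exists_nat_bool_injection_of_not_countable X t' ht'pol B hBclosed hBu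
    exact ⟨f, hfr, continuous_le_rng ht'le hfc, hfi⟩
  obtain ⟨f, hfr, hf, hfi⟩ := hfex
  set Et : Set ((ℕ → Bool) × (ℕ → Bool)) :=
    (fun p : (ℕ → Bool) × (ℕ → Bool) => (f p.1, f p.2)) ⁻¹' {p : X × X | E p.1 p.2} with hEtdef
  have hfc2 : Continuous fun p : (ℕ → Bool) × (ℕ → Bool) => (f p.1, f p.2) :=
    (hf.comp continuous_fst).prodMk (hf.comp continuous_snd)
  haveI : TopologicalSpace.SeparableSpace (ℕ → Bool) := inferInstance
  have hEta : AnalyticSet Et := hEan.preimage hfc2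
  have himg : ∀ Ct : Set (ℕ → Bool), IsCompact Ct → ¬ Ct.Countable →
      (f '' Ct ⊆ B ∧ MeasurableSet (f '' Ct) ∧ ¬ (f '' Ct).Countable ∧ IsClosed (f '' Ct)) := by
    intro Ct hc1 hc2
    have hcl : IsClosed (f '' Ct) := (hc1.image hf).isClosed
    refine ⟨(image_subset_range f Ct).trans hfr, hcl.measurableSet, ?_, hcl⟩
    intro hcnt
    exact hc2 ((hcnt.preimage hfi).mono (subset_preimage_image f Ct))
  by_cases hme : IsMeagre Et
  · -- meager case : compact partial transversal
    obtain ⟨M, hM, hMcov⟩ := DST.meager_cover hme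
    obtain ⟨Ct, hc1, hc2, -, -, hc5⟩ := DST.fusion (w₀ := ([] : List Bool))
      (D := fun _ => univ) (M := M)
      (fun _ => isOpen_univ) (fun k c _ => by simpa using DST.cyl_nonempty c)
      (fun k => (hM k).1) (fun k => (hM k).2)
    obtain ⟨hs1, hs2, hs3, hs4⟩ := himg Ct hc1 hc2
    refine ⟨f '' Ct, hs1, hs2, hs3, ?_⟩
    have he : {p : X × X | E p.1 p.2} ∩ (f '' Ct) ×ˢ (f '' Ct) =
        {p : X × X | p.1 = p.2} ∩ (f '' Ct) ×ˢ (f '' Ct) := by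
      ext ⟨p1, p2⟩
      simp only [mem_inter_iff, mem_setOf_eq, mem_prod]
      constructor
      · rintro ⟨hEp, ⟨u, hu, rfl⟩, ⟨w, hw, rfl⟩⟩
        refine ⟨?_, ⟨u, hu, rfl⟩, ⟨w, hw, rfl⟩⟩
        by_cases huw : u = w
        · rw [huw]
        · exfalso
          have hEt : (u, w) ∈ Et := hEp
          obtain ⟨k, hk⟩ := mem_iUnion.1 (hMcov hEt)
          exact hc5 u hu w hw huw k hk
      · rintro ⟨heq, ⟨u, hu, h1⟩, ⟨w, hw, h2⟩⟩
        refine ⟨?_, ⟨u, hu, h1⟩, ⟨w, hw, h2⟩⟩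
        rw [heq]
        exact hE.refl p2
    rw [he]
    exact isClosed_diagonal.measurableSet.inter ((hs4.prod hs4).measurableSet)
  · -- nonmeager case : comeager in a box, one class is big
    obtain ⟨O, hOo, hOne, hOm⟩ := DST.bpd hEta hme
    obtain ⟨⟨u₀, v₀⟩, hp₀⟩ := hOne
    obtain ⟨U, V, hUo, hVo, hu₀, hv₀, hUV⟩ := isOpen_prod_iff.1 hOo u₀ v₀ hp₀
    have hm2 : IsMeagre ((U ×ˢ V) \ Et) :=
      hOm.mono fun p (hp : p ∈ (U ×ˢ V) \ Et) => Set.mem_diff_of_mem (hUV hp.1) hp.2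
    obtain ⟨x, hxU, Ct, hc1, hc2, hc3⟩ := DST.ku hUo ⟨u₀, hu₀⟩ hVo ⟨v₀, hv₀⟩ hm2
    obtain ⟨hs1, hs2, hs3, hs4⟩ := himg Ct hc1 hc2
    refine ⟨f '' Ct, hs1, hs2, hs3, ?_⟩
    have hsub : (f '' Ct) ×ˢ (f '' Ct) ⊆ {p : X × X | E p.1 p.2} := by
      rintro ⟨p1, p2⟩ ⟨⟨u, hu, rfl⟩, ⟨w, hw, rfl⟩⟩
      have h1 : E (f x) (f u) := hc3 u hu
      have h2 : E (f x) (f w) := hc3 w hw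
      exact hE.trans (hE.symm h1) h2
    rw [inter_eq_self_of_subset_right hsub]
    exact (hs4.prod hs4).measurableSet
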